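/- Let μ ∈ ℂ and set κ := −2π/log q and μ_k := μ + kκi for k ∈ ℤ. Then: (a) F(μ;q,·) is entire and satisfies F′(x) = q^μ·F(qx) − F(x) for all x ∈ ℂ, where derivatives are in x; (b) for every k ∈ ℤ, the function H_k(x) := x^{−μ_k}·G(μ_k; q, 1/x), defined and holomorphic on ℂ ∖ (−∞,0], satisfies H_k′(x) = q^μ·H_k(qx) − H_k(x) for all x ∈ ℂ ∖ (−∞,0]. -/

import Mathlib

/-- `(a;c)_n = ∏_{j=0}^{n-1} (1 - a c^j)`. -/
noncomputable def qPoch (a c : ℂ) (n : ℕ) : ℂ := ∏ j ∈ Finset.range n, (1 - a * c ^ j)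

/-- `(a;c)_∞ = ∏_{j=0}^{∞} (1 - a c^j)`. -/
noncomputable def qPochInf (a c : ℂ) : ℂ := ∏' j : ℕ, (1 - a * c ^ j)

/-- `q^μ := exp (μ log q)` for real `q > 0` and complex `μ`. -/
noncomputable def qpow (q : ℝ) (μ : ℂ) : ℂ := Complex.exp (μ * Real.log q)

/-- `F(μ;q,x) = Σ_{n≥0} ((q^μ;q)_n / n!) (-x)^n`. -/
noncomputable def F (μ : ℂ) (q : ℝ) (x : ℂ) : ℂ :=
  ∑' n : ℕ, qPoch (qpow q μ) (q : ℂ) n / (Nat.factorial n : ℂ) * (-x) ^ n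

/-- `(a)_n = a (a+1) ⋯ (a+n-1)`. -/
noncomputable def poch (a : ℂ) (n : ℕ) : ℂ := ∏ j ∈ Finset.range n, (a + (j : ℂ))

/-- `G(a;q,x) = Σ_{n≥0} ((a)_n q^{n(n+1)/2} / (q;q)_n) (-x)^n`. -/
noncomputable def G (a : ℂ) (q : ℝ) (x : ℂ) : ℂ :=
  ∑' n : ℕ, poch a n * (q : ℂ) ^ (n * (n + 1) / 2) / qPoch (q : ℂ) (q : ℂ) n * (-x) ^ n

open Filter Topology

private lemma sumaux {g r : ℕ → ℝ} (hg : ∀ n, 0 ≤ g n)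
    (h : ∀ n, g (n+1) ≤ r n * g n) (hr : Tendsto r atTop (𝓝 0)) : Summable g := by
  apply summable_of_ratio_norm_eventually_le (r := 1/2) (by norm_num : (1:ℝ)/2 < 1)
  filter_upwards [hr.eventually_lt_const (by norm_num : (0:ℝ) < 1/2)] with n hn
  rw [Real.norm_of_nonneg (hg _), Real.norm_of_nonneg (hg _)]
  calc g (n+1) ≤ r n * g n := h n
    _ ≤ 1/2 * g n := mul_le_mul_of_nonneg_right hn.le (hg n)

private lemma growth {c : ℕ → ℂ} {ρ : ℕ → ℝ} (hρ0 : ∀ n, 0 ≤ ρ n)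
    (hc : ∀ n, ‖c (n+1)‖ ≤ ρ n * ‖c n‖) (hρ : Tendsto ρ atTop (𝓝 0)) :
    ∀ R : ℝ, 1 ≤ R → Summable fun n : ℕ => ((n:ℝ)+1) * ‖c n‖ * R ^ n := by
  intro R hR
  have hR0 : (0:ℝ) < R := lt_of_lt_of_le one_pos hR
  apply sumaux (r := fun n => 2 * R * ρ n)
  · intro n; positivity
  · intro n
    push_cast
    calc ((n:ℝ)+1+1) * ‖c (n+1)‖ * R ^ (n+1)
        ≤ (2*((n:ℝ)+1)) * (ρ n * ‖c n‖) * R ^ (n+1) := by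
          apply mul_le_mul_of_nonneg_right _ (by positivity)
          apply mul_le_mul (by linarith) (hc n) (norm_nonneg _) (by positivity)
      _ = 2 * R * ρ n * (((n:ℝ)+1) * ‖c n‖ * R ^ n) := by ring
  · simpa using hρ.const_mul (2*R)

private lemma summable_val {c : ℕ → ℂ}
    (h : ∀ R : ℝ, 1 ≤ R → Summable fun n : ℕ => ((n:ℝ)+1) * ‖c n‖ * R ^ n)
    (x : ℂ) : Summable fun n : ℕ => c n * x ^ n := by
  apply Summable.of_norm
  apply Summable.of_nonneg_of_le (fun n => norm_nonneg _) _
    (h (‖x‖+1) (le_add_of_nonneg_left (norm_nonneg _)))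
  intro n
  rw [norm_mul, norm_pow]
  calc ‖c n‖ * ‖x‖ ^ n ≤ ‖c n‖ * (‖x‖+1) ^ n := by
        apply mul_le_mul_of_nonneg_left (pow_le_pow_left₀ (norm_nonneg _) (by linarith) n)
          (norm_nonneg _)
    _ ≤ ((n:ℝ)+1) * ‖c n‖ * (‖x‖+1) ^ n := by
        apply mul_le_mul_of_nonneg_right _ (by positivity)
        nlinarith [norm_nonneg (c n), Nat.cast_nonneg (α := ℝ) n]

private lemma summable_dval {c : ℕ → ℂ}
    (h : ∀ R : ℝ, 1 ≤ R → Summable fun n : ℕ => ((n:ℝ)+1) * ‖c n‖ * R ^ n)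
    (x : ℂ) : Summable fun n : ℕ => ((n:ℂ)+1) * c (n+1) * x ^ n := by
  have hs := (h (‖x‖+1) (le_add_of_nonneg_left (norm_nonneg _))).comp_injective
    (add_left_injective 1)
  apply Summable.of_norm
  apply Summable.of_nonneg_of_le (fun n => norm_nonneg _) _ hs
  intro n
  simp only [Function.comp]
  rw [norm_mul, norm_mul, norm_pow]
  have h1 : ‖(n:ℂ)+1‖ = (n:ℝ)+1 := by
    rw [show ((n:ℂ)+1) = ((n+1:ℕ):ℂ) by push_cast; ring, Complex.norm_natCast]; push_cast; ring
  rw [h1]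
  push_cast
  calc ((n:ℝ)+1) * ‖c (n+1)‖ * ‖x‖ ^ n
      ≤ ((n:ℝ)+1+1) * ‖c (n+1)‖ * ‖x‖ ^ n := by
        apply mul_le_mul_of_nonneg_right _ (by positivity)
        nlinarith [norm_nonneg (c (n+1))]
    _ ≤ ((n:ℝ)+1+1) * ‖c (n+1)‖ * (‖x‖+1) ^ (n+1) := by
        apply mul_le_mul_of_nonneg_left _ (by positivity)
        calc ‖x‖ ^ n ≤ (‖x‖+1) ^ n := pow_le_pow_left₀ (norm_nonneg _) (by linarith) n
          _ ≤ (‖x‖+1) ^ (n+1) := pow_le_pow_right₀ (by linarith [norm_nonneg x]) (Nat.le_succ n)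


private lemma summable_val' {c : ℕ → ℂ}
    (h : ∀ R : ℝ, 1 ≤ R → Summable fun n : ℕ => ((n:ℝ)+1) * ‖c n‖ * R ^ n)
    (x : ℂ) : Summable fun n : ℕ => c n * ((n:ℂ) * x ^ (n-1)) := by
  apply Summable.of_norm
  apply Summable.of_nonneg_of_le (fun n => norm_nonneg _) _
    (h (‖x‖+1) (le_add_of_nonneg_left (norm_nonneg _)))
  intro n
  rw [norm_mul, norm_mul, norm_pow, Complex.norm_natCast]
  have hx1 : (1:ℝ) ≤ ‖x‖ + 1 := le_add_of_nonneg_left (norm_nonneg _)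
  calc ‖c n‖ * ((n:ℝ) * ‖x‖ ^ (n-1))
      ≤ ‖c n‖ * (((n:ℝ)+1) * (‖x‖+1) ^ n) := by
        apply mul_le_mul_of_nonneg_left _ (norm_nonneg _)
        apply mul_le_mul (by linarith) _ (by positivity) (by positivity)
        calc ‖x‖ ^ (n-1) ≤ (‖x‖+1) ^ (n-1) :=
              pow_le_pow_left₀ (norm_nonneg _) (by linarith) _
          _ ≤ (‖x‖+1) ^ n := pow_le_pow_right₀ hx1 (Nat.sub_le n 1)
    _ = ((n:ℝ)+1) * ‖c n‖ * (‖x‖+1) ^ n := by ring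

private lemma hasDerivAt_tsum_pow {c : ℕ → ℂ}
    (h : ∀ R : ℝ, 1 ≤ R → Summable fun n : ℕ => ((n:ℝ)+1) * ‖c n‖ * R ^ n)
    (x : ℂ) :
    HasDerivAt (fun z : ℂ => ∑' n : ℕ, c n * z ^ n)
      (∑' n : ℕ, ((n:ℂ)+1) * c (n+1) * x ^ n) x := by
  set R : ℝ := ‖x‖ + 1 with hRdef
  have hR : 1 ≤ R := le_add_of_nonneg_left (norm_nonneg _)
  have hR0 : (0:ℝ) < R := lt_of_lt_of_le one_pos hR
  have key : HasDerivAt (fun z : ℂ => ∑' n : ℕ, c n * z ^ n)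
      (∑' n : ℕ, c n * ((n:ℂ) * x ^ (n-1))) x := by
    apply hasDerivAt_tsum_of_isPreconnected (h R hR) Metric.isOpen_ball
      (convex_ball (0:ℂ) R).isPreconnected
      (g' := fun n y => c n * ((n:ℂ) * y ^ (n-1))) (y₀ := x)
      (fun n y _ => (hasDerivAt_pow n y).const_mul (c n)) _
      (by rw [Metric.mem_ball, dist_zero_right, hRdef]; linarith)
      (by
        apply Summable.of_norm
        apply Summable.of_nonneg_of_le (fun n => norm_nonneg _) _ (h R hR)
        intro n
        rw [norm_mul, norm_pow]
        calc ‖c n‖ * ‖x‖ ^ n ≤ ‖c n‖ * R ^ n := by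
              apply mul_le_mul_of_nonneg_left
                (pow_le_pow_left₀ (norm_nonneg _) (by simp [hRdef]) n) (norm_nonneg _)
          _ ≤ ((n:ℝ)+1) * ‖c n‖ * R ^ n := by
              nlinarith [norm_nonneg (c n), pow_nonneg hR0.le n, Nat.cast_nonneg (α := ℝ) n,
                mul_nonneg (norm_nonneg (c n)) (pow_nonneg hR0.le n)])
      (by rw [Metric.mem_ball, dist_zero_right, hRdef]; linarith)
    · intro n y hy
      rw [norm_mul, norm_mul, norm_pow, Complex.norm_natCast]
      have hyR : ‖y‖ ≤ R := by
        rw [Metric.mem_ball, dist_zero_right] at hy; exact hy.le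
      calc ‖c n‖ * ((n:ℝ) * ‖y‖ ^ (n-1))
          ≤ ‖c n‖ * (((n:ℝ)+1) * R ^ n) := by
            apply mul_le_mul_of_nonneg_left _ (norm_nonneg _)
            apply mul_le_mul (by linarith) _ (by positivity) (by positivity)
            calc ‖y‖ ^ (n-1) ≤ R ^ (n-1) := pow_le_pow_left₀ (norm_nonneg _) hyR _
              _ ≤ R ^ n := pow_le_pow_right₀ hR (Nat.sub_le n 1)
        _ = ((n:ℝ)+1) * ‖c n‖ * R ^ n := by ring
  convert key using 1
  rw [Summable.tsum_eq_zero_add (summable_val' h x)]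
  simp only [Nat.cast_zero, zero_mul, mul_zero, zero_add]
  apply tsum_congr
  intro n
  rw [Nat.add_sub_cancel]
  push_cast
  ring

private lemma cF_rec (w : ℂ) (q : ℝ) (n : ℕ) :
    qPoch w (q:ℂ) (n+1) * (-1)^(n+1) / ((n+1).factorial : ℂ)
      = (qPoch w (q:ℂ) n * (-1)^n / (n.factorial : ℂ))
        * ((1 - w * (q:ℂ)^n) * (-1) / ((n:ℂ)+1)) := by
  rw [qPoch, qPoch, Finset.prod_range_succ, Nat.factorial_succ]
  have h1 : ((n.factorial : ℂ)) ≠ 0 := Nat.cast_ne_zero.mpr n.factorial_ne_zero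
  have h2 : ((n:ℂ)+1) ≠ 0 := Nat.cast_add_one_ne_zero n
  push_cast
  field_simp
  ring

private lemma growth_cF (w : ℂ) (q : ℝ) (hq0 : 0 < q) (hq1 : q < 1) :
    ∀ R : ℝ, 1 ≤ R → Summable fun n : ℕ =>
      ((n:ℝ)+1) * ‖qPoch w (q:ℂ) n * (-1)^n / (n.factorial : ℂ)‖ * R ^ n := by
  apply growth (ρ := fun n => (1+‖w‖)/((n:ℝ)+1))
  · intro n; positivity
  · intro n
    rw [cF_rec, norm_mul, mul_comm ((1+‖w‖)/((n:ℝ)+1)) _]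
    apply mul_le_mul_of_nonneg_left _ (norm_nonneg _)
    rw [norm_div, norm_mul, norm_neg, norm_one, mul_one]
    have hn1 : ‖(n:ℂ)+1‖ = (n:ℝ)+1 := by
      rw [show ((n:ℂ)+1) = ((n+1:ℕ):ℂ) by push_cast; ring, Complex.norm_natCast]; push_cast; ring
    rw [hn1]
    apply div_le_div_of_nonneg_right _ (by positivity)
    calc ‖1 - w * (q:ℂ)^n‖ ≤ ‖(1:ℂ)‖ + ‖w * (q:ℂ)^n‖ := norm_sub_le _ _
      _ = 1 + ‖w‖ * q^n := by
          rw [norm_one, norm_mul, norm_pow, Complex.norm_real,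
            Real.norm_of_nonneg hq0.le]
      _ ≤ 1 + ‖w‖ := by
          have : q^n ≤ 1 := pow_le_one₀ hq0.le hq1.le
          nlinarith [norm_nonneg w]
  · simpa [mul_one_div, div_eq_mul_inv] using
      tendsto_one_div_add_atTop_nhds_zero_nat.const_mul (1+‖w‖)

private lemma cF_key (w : ℂ) (q : ℝ) (n : ℕ) :
    ((n:ℂ)+1) * (qPoch w (q:ℂ) (n+1) * (-1)^(n+1) / ((n+1).factorial : ℂ))
    = (qPoch w (q:ℂ) n * (-1)^n / (n.factorial : ℂ)) * (w * (q:ℂ)^n - 1) := by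
  simp only [qPoch, Finset.prod_range_succ, Nat.factorial_succ]
  have h1 : ((n.factorial : ℂ)) ≠ 0 := Nat.cast_ne_zero.mpr n.factorial_ne_zero
  have h2 : ((n:ℂ)+1) ≠ 0 := Nat.cast_add_one_ne_zero n
  push_cast
  field_simp
  ring

private lemma F_deriv (μ : ℂ) (q : ℝ) (hq0 : 0 < q) (hq1 : q < 1) (x : ℂ) :
    HasDerivAt (F μ q) (qpow q μ * F μ q ((q : ℂ) * x) - F μ q x) x := by
  have hgrow := growth_cF (qpow q μ) q hq0 hq1
  have hfun : F μ q
      = fun z => ∑' n : ℕ, (qPoch (qpow q μ) (q:ℂ) n * (-1)^n / (n.factorial : ℂ)) * z ^ n := by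
    funext z
    exact tsum_congr fun n => by rw [neg_pow]; ring
  rw [hfun]
  convert hasDerivAt_tsum_pow hgrow x using 1
  simp only
  rw [← tsum_mul_left, ← Summable.tsum_sub ((summable_val hgrow _).mul_left _) (summable_val hgrow x)]
  apply tsum_congr
  intro n
  rw [mul_pow, show ((n:ℂ)+1) * (qPoch (qpow q μ) (q:ℂ) (n+1) * (-1)^(n+1) / ((n+1).factorial : ℂ))
      = (qPoch (qpow q μ) (q:ℂ) n * (-1)^n / (n.factorial : ℂ)) * (qpow q μ * (q:ℂ)^n - 1)
    from cF_key (qpow q μ) q n]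
  ring

private lemma qPoch_succ (a c : ℂ) (n : ℕ) :
    qPoch a c (n+1) = qPoch a c n * (1 - a * c^n) := Finset.prod_range_succ _ _

private lemma one_sub_qpow_pos (q : ℝ) (hq0 : 0 < q) (hq1 : q < 1) (n : ℕ) :
    0 < 1 - q^(n+1) := sub_pos.mpr (pow_lt_one₀ hq0.le hq1 (Nat.succ_ne_zero n))

private lemma one_sub_qpow_ne (q : ℝ) (hq0 : 0 < q) (hq1 : q < 1) (n : ℕ) :
    (1 - (q:ℂ)^(n+1)) ≠ 0 := by
  rw [show (1 - (q:ℂ)^(n+1)) = ((1 - q^(n+1):ℝ):ℂ) by push_cast; ring]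
  exact Complex.ofReal_ne_zero.mpr (one_sub_qpow_pos q hq0 hq1 n).ne'

private lemma qPoch_q_ne (q : ℝ) (hq0 : 0 < q) (hq1 : q < 1) (n : ℕ) :
    qPoch (q:ℂ) (q:ℂ) n ≠ 0 := by
  rw [qPoch]
  apply Finset.prod_ne_zero_iff.mpr
  intro j _
  rw [show (1 - (q:ℂ) * (q:ℂ)^j) = 1 - (q:ℂ)^(j+1) by ring]
  exact one_sub_qpow_ne q hq0 hq1 j

private lemma eG_rec (a : ℂ) (q : ℝ) (hq0 : 0 < q) (hq1 : q < 1) (n : ℕ) :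
    poch a (n+1) * (q:ℂ)^((n+1)*(n+1+1)/2) / qPoch (q:ℂ) (q:ℂ) (n+1) * (-1)^(n+1)
    = (poch a n * (q:ℂ)^(n*(n+1)/2) / qPoch (q:ℂ) (q:ℂ) n * (-1)^n)
      * ((a + (n:ℂ)) * (q:ℂ)^(n+1) / (1 - (q:ℂ)^(n+1)) * (-1)) := by
  have he : (n+1)*(n+1+1)/2 = n*(n+1)/2 + (n+1) := by
    rw [show (n+1)*(n+1+1) = n*(n+1) + 2*(n+1) by ring,
      Nat.add_mul_div_left _ _ (by norm_num : 0 < 2)]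
  rw [poch, poch, Finset.prod_range_succ, he, pow_add, qPoch_succ,
    show (1 - (q:ℂ) * (q:ℂ)^n) = 1 - (q:ℂ)^(n+1) by ring]
  have h1 := qPoch_q_ne q hq0 hq1 n
  have h2 := one_sub_qpow_ne q hq0 hq1 n
  field_simp
  ring

private lemma growth_eG (a : ℂ) (q : ℝ) (hq0 : 0 < q) (hq1 : q < 1) :
    ∀ R : ℝ, 1 ≤ R → Summable fun n : ℕ =>
      ((n:ℝ)+1) * ‖poch a n * (q:ℂ)^(n*(n+1)/2) / qPoch (q:ℂ) (q:ℂ) n * (-1)^n‖ * R ^ n := by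
  have hq' : (0:ℝ) < 1 - q := by linarith
  apply growth (ρ := fun n => (‖a‖ + (n:ℝ) + 2) * q^(n+1) / (1-q))
  · intro n
    have h0 : (0:ℝ) ≤ (n:ℝ) := Nat.cast_nonneg n
    positivity
  · intro n
    rw [eG_rec a q hq0 hq1 n, norm_mul, mul_comm ((‖a‖ + (n:ℝ) + 2) * q^(n+1) / (1-q)) _]
    apply mul_le_mul_of_nonneg_left _ (norm_nonneg _)
    have e1 : ‖(q:ℂ)^(n+1)‖ = q^(n+1) := by
      rw [norm_pow, Complex.norm_real, Real.norm_of_nonneg hq0.le]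
    have e2 : ‖(1 - (q:ℂ)^(n+1))‖ = 1 - q^(n+1) := by
      rw [show (1 - (q:ℂ)^(n+1)) = ((1 - q^(n+1):ℝ):ℂ) by push_cast; ring,
        Complex.norm_real, Real.norm_of_nonneg (one_sub_qpow_pos q hq0 hq1 n).le]
    rw [norm_mul, norm_neg, norm_one, mul_one, norm_div, norm_mul, e1, e2]
    have h1 : ‖a + (n:ℂ)‖ ≤ ‖a‖ + (n:ℝ) + 2 := by
      calc ‖a + (n:ℂ)‖ ≤ ‖a‖ + ‖(n:ℂ)‖ := norm_add_le _ _
        _ = ‖a‖ + (n:ℝ) := by rw [Complex.norm_natCast]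
        _ ≤ ‖a‖ + (n:ℝ) + 2 := by linarith
    have h2 : 1 - q ≤ 1 - q^(n+1) := by
      have : q^(n+1) ≤ q := by
        calc q^(n+1) ≤ q^1 := pow_le_pow_of_le_one hq0.le hq1.le (by omega)
          _ = q := pow_one q
      linarith
    gcongr
  · have s1 : Tendsto (fun n : ℕ => (n:ℝ) * q^n) atTop (𝓝 0) := by
      have := (summable_pow_mul_geometric_of_norm_lt_one 1
        (by rw [Real.norm_of_nonneg hq0.le]; exact hq1 : ‖q‖ < 1)).tendsto_atTop_zero
      simpa using this
    have s2 : Tendsto (fun n : ℕ => q^n) atTop (𝓝 0) :=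
      tendsto_pow_atTop_nhds_zero_of_lt_one hq0.le hq1
    have s3 : Tendsto (fun n : ℕ => q/(1-q) * ((‖a‖+2) * q^n + (n:ℝ) * q^n))
        atTop (𝓝 0) := by
      simpa using ((s2.const_mul (‖a‖+2)).add s1).const_mul (q/(1-q))
    have e : (fun n : ℕ => (‖a‖ + (n:ℝ) + 2) * q^(n+1) / (1-q))
        = fun n : ℕ => q/(1-q) * ((‖a‖+2) * q^n + (n:ℝ) * q^n) := by
      funext n
      field_simp
      ring
    rw [e]
    exact s3

private lemma step_cpow (q : ℝ) (hq0 : 0 < q) {x : ℂ} (hx : x ≠ 0) (s : ℂ) :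
    ((q:ℂ) * x) ^ s = Complex.exp (s * (Real.log q : ℂ)) * x ^ s := by
  rw [Complex.cpow_def_of_ne_zero (mul_ne_zero (Complex.ofReal_ne_zero.mpr hq0.ne') hx),
    Complex.cpow_def_of_ne_zero hx, Complex.log_ofReal_mul hq0 hx, add_mul, Complex.exp_add, mul_comm s ((Real.log q : ℂ))]


/-- `F(μ;q,·)` is an entire solution of `y' = q^μ y(q·) - y`, and for each `k ∈ ℤ`,
`x ↦ x^{-μ_k} G(μ_k;q,1/x)` (with `μ_k = μ + kκi`, `κ = -2π/log q`) is a holomorphic solution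
on the slit plane `ℂ ∖ (-∞,0]`. -/
theorem stmt3 (q : ℝ) (hq0 : 0 < q) (hq1 : q < 1)
    (κ : ℝ) (hκ : κ = -(2 * Real.pi) / Real.log q) (μ : ℂ) :
    (Differentiable ℂ (F μ q) ∧
      ∀ x : ℂ, HasDerivAt (F μ q) (qpow q μ * F μ q ((q : ℂ) * x) - F μ q x) x) ∧
    (∀ k : ℤ,
      DifferentiableOn ℂ
        (fun z : ℂ => z ^ (-(μ + (k : ℂ) * (κ : ℂ) * Complex.I)) *
          G (μ + (k : ℂ) * (κ : ℂ) * Complex.I) q (1 / z)) Complex.slitPlane ∧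
      ∀ x ∈ Complex.slitPlane,
        HasDerivAt
          (fun z : ℂ => z ^ (-(μ + (k : ℂ) * (κ : ℂ) * Complex.I)) *
            G (μ + (k : ℂ) * (κ : ℂ) * Complex.I) q (1 / z))
          (qpow q μ *
              (((q : ℂ) * x) ^ (-(μ + (k : ℂ) * (κ : ℂ) * Complex.I)) *
                G (μ + (k : ℂ) * (κ : ℂ) * Complex.I) q (1 / ((q : ℂ) * x))) -
            x ^ (-(μ + (k : ℂ) * (κ : ℂ) * Complex.I)) *
              G (μ + (k : ℂ) * (κ : ℂ) * Complex.I) q (1 / x))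
          x) := by
  constructor
  · exact ⟨fun x => (F_deriv μ q hq0 hq1 x).differentiableAt,
      fun x => F_deriv μ q hq0 hq1 x⟩
  intro k
  set a : ℂ := μ + (k : ℂ) * (κ : ℂ) * Complex.I with ha
  -- unit fact
  have hL : Real.log q ≠ 0 := (Real.log_neg hq0 hq1).ne
  have hκL : κ * Real.log q = -(2 * Real.pi) := by
    rw [hκ]; field_simp
  have hcL : (κ:ℂ) * (Real.log q : ℂ) = -(2*(Real.pi:ℂ)) := by
    have := congrArg (fun t : ℝ => (t : ℂ)) hκL
    push_cast at this
    exact this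
  have hu : qpow q μ * Complex.exp ((-a) * (Real.log q : ℂ)) = 1 := by
    rw [qpow, ← Complex.exp_add, ha]
    rw [show μ * (Real.log q : ℂ) + -(μ + (k:ℂ)*(κ:ℂ)*Complex.I) * (Real.log q : ℂ)
        = (k:ℂ) * (2*(Real.pi:ℂ)*Complex.I) by
      linear_combination (-(k:ℂ)*Complex.I) * hcL]
    exact Complex.exp_int_mul_two_pi_mul_I k
  -- series setup
  have hgG := growth_eG a q hq0 hq1
  set eG : ℕ → ℂ := fun n =>
    poch a n * (q:ℂ)^(n*(n+1)/2) / qPoch (q:ℂ) (q:ℂ) n * (-1)^n with heG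
  have hG_eq : G a q = fun y => ∑' n : ℕ, eG n * y ^ n := by
    funext y
    exact tsum_congr fun n => by rw [heG, neg_pow]; ring
  have hGd : ∀ y : ℂ, HasDerivAt (G a q)
      (∑' n : ℕ, ((n:ℂ)+1) * eG (n+1) * y^n) y := by
    intro y
    rw [hG_eq]
    exact hasDerivAt_tsum_pow hgG y
  have hqC : (q:ℂ) ≠ 0 := Complex.ofReal_ne_zero.mpr hq0.ne'
  -- core series identity
  have CORE : ∀ y : ℂ, G a q ((q:ℂ)⁻¹ * y) - G a q y
      = -a*y*(G a q y) - (∑' n : ℕ, ((n:ℂ)+1) * eG (n+1) * y^n) * y^2 := by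
    intro y
    rw [hG_eq]
    simp only
    have SA : Summable fun n : ℕ => eG n * ((q:ℂ)⁻¹*y)^n := summable_val hgG _
    have SB : Summable fun n : ℕ => eG n * y^n := summable_val hgG y
    have SD : Summable fun n : ℕ => ((n:ℂ)+1) * eG (n+1) * y^n := summable_dval hgG y
    have S2 : Summable fun n : ℕ => (n:ℂ) * eG n * y^(n+1) := by
      apply (_root_.summable_nat_add_iff 1).mp
      have e : (fun n : ℕ => ((n+1:ℕ):ℂ) * eG (n+1) * y^(n+1+1))
          = fun n : ℕ => y^2 * (((n:ℂ)+1) * eG (n+1) * y^n) := by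
        funext n; push_cast; ring
      exact e ▸ SD.mul_left (y^2)
    have hy2 : (∑' n : ℕ, ((n:ℂ)+1) * eG (n+1) * y^n) * y^2
        = ∑' n : ℕ, (n:ℂ) * eG n * y^(n+1) := by
      rw [Summable.tsum_eq_zero_add S2]
      simp only [Nat.cast_zero, zero_mul, zero_add]
      rw [mul_comm, ← tsum_mul_left]
      exact tsum_congr fun n => by push_cast; ring
    calc (∑' n : ℕ, eG n * ((q:ℂ)⁻¹*y)^n) - ∑' n : ℕ, eG n * y^n
        = ∑' n : ℕ, (eG n * ((q:ℂ)⁻¹*y)^n - eG n * y^n) := (Summable.tsum_sub SA SB).symm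
      _ = (eG 0 * ((q:ℂ)⁻¹*y)^0 - eG 0 * y^0)
          + ∑' n : ℕ, (eG (n+1) * ((q:ℂ)⁻¹*y)^(n+1) - eG (n+1) * y^(n+1)) :=
          Summable.tsum_eq_zero_add (SA.sub SB)
      _ = ∑' n : ℕ, ((-a*y)*(eG n * y^n) - (n:ℂ) * eG n * y^(n+1)) := by
          simp only [pow_zero, mul_one, sub_self, zero_add]
          apply tsum_congr
          intro n
          rw [heG]
          simp only
          rw [eG_rec a q hq0 hq1 n, mul_pow, inv_pow]
          have h1 := qPoch_q_ne q hq0 hq1 n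
          have h2 := one_sub_qpow_ne q hq0 hq1 n
          have h3 : (q:ℂ)^(n+1) ≠ 0 := pow_ne_zero _ hqC
          field_simp
          ring
      _ = (∑' n : ℕ, (-a*y)*(eG n * y^n)) - ∑' n : ℕ, (n:ℂ) * eG n * y^(n+1) :=
          Summable.tsum_sub (SB.mul_left _) S2
      _ = -a*y*(∑' n : ℕ, eG n * y^n)
          - (∑' n : ℕ, ((n:ℂ)+1) * eG (n+1) * y^n) * y^2 := by
          rw [tsum_mul_left, hy2]
  -- main derivative statement
  have main : ∀ x ∈ Complex.slitPlane,
      HasDerivAt (fun z : ℂ => z ^ (-a) * G a q (1/z))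
        (qpow q μ * (((q:ℂ)*x) ^ (-a) * G a q (1/((q:ℂ)*x)))
          - x ^ (-a) * G a q (1/x)) x := by
    intro x hx
    have hx0 : x ≠ 0 := Complex.slitPlane_ne_zero hx
    have h1 : HasDerivAt (fun z : ℂ => z ^ (-a)) (-a * x ^ (-a-1)) x :=
      (Complex.hasStrictDerivAt_cpow_const hx).hasDerivAt
    have h2 : HasDerivAt (fun z : ℂ => 1/z) (-(x^2)⁻¹) x := by
      simpa [one_div] using hasDerivAt_inv hx0
    have h3 : HasDerivAt (fun z : ℂ => G a q (1/z))
        ((∑' n : ℕ, ((n:ℂ)+1) * eG (n+1) * (1/x)^n) * -(x^2)⁻¹) x :=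
      (hGd (1/x)).comp x h2
    have h4 := h1.mul h3
    refine h4.congr_deriv (Eq.symm ?_)
    have hpow : x ^ (-a-1) = x ^ (-a) * x⁻¹ := by
      rw [show -a-1 = -a + (-1) by ring, Complex.cpow_add _ _ hx0, Complex.cpow_neg_one]
    calc qpow q μ * (((q:ℂ)*x) ^ (-a) * G a q (1/((q:ℂ)*x))) - x ^ (-a) * G a q (1/x)
        = x ^ (-a) * (G a q ((q:ℂ)⁻¹ * (1/x)) - G a q (1/x)) := by
          rw [step_cpow q hq0 hx0,
            show (1:ℂ)/((q:ℂ)*x) = (q:ℂ)⁻¹ * (1/x) by rw [one_div, one_div, mul_inv]]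
          linear_combination (x ^ (-a) * G a q ((q:ℂ)⁻¹ * (1/x))) * hu
      _ = x ^ (-a) * (-a*(1/x)*(G a q (1/x))
          - (∑' n : ℕ, ((n:ℂ)+1) * eG (n+1) * (1/x)^n) * (1/x)^2) := by
          rw [CORE (1/x)]
      _ = -a * x ^ (-a-1) * G a q (1/x)
          + x ^ (-a) * ((∑' n : ℕ, ((n:ℂ)+1) * eG (n+1) * (1/x)^n) * -(x^2)⁻¹) := by
          rw [hpow]
          field_simp
          ring
  exact ⟨fun x hx => (main x hx).differentiableAt.differentiableWithinAt,
    fun x hx => main x hx⟩
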